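/- Let μ be a probability measure on ℝ^d, λ > 0, and h* ∈ H¹(μ). Suppose h^λ minimizes J^λ(h) = ‖h − h*‖²_{L²(μ)} + λ‖∇h‖²_{L²(μ)} over H¹(μ), and suppose there exists g ∈ L²(μ) with −⟨∇h*, ∇v⟩_{L²(μ)} = ⟨g, v⟩_{L²(μ)} for all v ∈ H¹(μ). Then ‖h^λ − h*‖²_{L²(μ)} ≤ λ²‖g‖²_{L²(μ)} and ‖∇h^λ − ∇h*‖²_{L²(μ)} ≤ λ‖g‖²_{L²(μ)}. -/

import Mathlib

open MeasureTheory RealInnerProductSpace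

lemma aux_discrim {A B : ℝ} (hB : 0 ≤ B) (h : ∀ t : ℝ, 0 ≤ t^2*B - 2*t*A) : A = 0 := by
  have hB1 : (0:ℝ) < B + 1 := by linarith
  have h1 := h (A/(B+1))
  have e1 : (A/(B+1))^2*B - 2*(A/(B+1))*A = (A^2*B - 2*A^2*(B+1))/(B+1)^2 := by
    field_simp
  rw [e1] at h1
  have h2 : 0 ≤ A^2*B - 2*A^2*(B+1) := by
    have := mul_le_mul_of_nonneg_right h1 (sq_nonneg (B+1))
    rwa [zero_mul, div_mul_cancel₀ _ (pow_ne_zero 2 hB1.ne')] at this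
  have h3 : A^2 = 0 := le_antisymm (by nlinarith [sq_nonneg A]) (sq_nonneg A)
  exact pow_eq_zero_iff (two_ne_zero) |>.mp h3

lemma aux_cs {E G I : ℝ} (hE : 0 ≤ E) (hG : 0 ≤ G) (h : ∀ s : ℝ, 0 ≤ G + 2*s*I + s^2*E) :
    I^2 ≤ G*E := by
  apply le_of_forall_pos_le_add
  intro ε hε
  have hG1 : (0:ℝ) < G + 1 := by linarith
  set δ := ε/(G+1) with hδdef
  have hδ : 0 < δ := div_pos hε hG1
  have hEδ : 0 < E + δ := by linarith
  have h3 : 0 ≤ G + 2*(-I/(E+δ))*I + (-I/(E+δ))^2*(E+δ) := by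
    nlinarith [h (-I/(E+δ)), sq_nonneg (-I/(E+δ))]
  have e1 : G + 2*(-I/(E+δ))*I + (-I/(E+δ))^2*(E+δ) = G - I^2/(E+δ) := by
    field_simp; ring
  rw [e1] at h3
  have h6 : I^2 ≤ G*(E+δ) := (div_le_iff₀ hEδ).mp (by linarith)
  have h7 : G*δ ≤ ε := by
    rw [hδdef, mul_div_assoc']
    exact (div_le_iff₀ hG1).mpr (by nlinarith)
  nlinarith

lemma aux_integrable_inner {α : Type*} [MeasurableSpace α] {μ : Measure α}
    {E : Type*} [NormedAddCommGroup E] [InnerProductSpace ℝ E]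
    {F G : α → E} (hF : MemLp F 2 μ) (hG : MemLp G 2 μ) :
    Integrable (fun x => ⟪F x, G x⟫) μ := by
  have h := L2.integrable_inner (𝕜 := ℝ) (hF.toLp F) (hG.toLp G)
  apply h.congr
  filter_upwards [hF.coeFn_toLp, hG.coeFn_toLp] with x h1 h2
  rw [h1, h2]

lemma aux_integrable_mul {α : Type*} [MeasurableSpace α] {μ : Measure α}
    {f g : α → ℝ} (hf : MemLp f 2 μ) (hg : MemLp g 2 μ) :
    Integrable (fun x => f x * g x) μ := by
  simpa [RCLike.inner_apply] using aux_integrable_inner hg hf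

lemma aux_grad_comb {d : ℕ} (a b : EuclideanSpace ℝ (Fin d) → ℝ)
    (ha : Differentiable ℝ a) (hb : Differentiable ℝ b) (t : ℝ)
    (x : EuclideanSpace ℝ (Fin d)) :
    HasGradientAt (fun y => a y + t * (b y - a y))
      (gradient a x + t • (gradient b x - gradient a x)) x := by
  have h1 := (ha x).hasGradientAt.hasFDerivAt
  have h2 := (hb x).hasGradientAt.hasFDerivAt
  have h3 := h1.add ((h2.sub h1).const_mul t)
  have e1 : (InnerProductSpace.toDual ℝ (EuclideanSpace ℝ (Fin d))) (gradient a x)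
      + t • ((InnerProductSpace.toDual ℝ (EuclideanSpace ℝ (Fin d))) (gradient b x)
        - (InnerProductSpace.toDual ℝ (EuclideanSpace ℝ (Fin d))) (gradient a x))
      = (InnerProductSpace.toDual ℝ (EuclideanSpace ℝ (Fin d)))
          (gradient a x + t • (gradient b x - gradient a x)) := by
    simp [map_add, map_sub, _root_.map_smul]
  rw [e1] at h3
  have h4 := h3.hasGradientAt
  rwa [LinearIsometryEquiv.symm_apply_apply] at h4

lemma aux_grad_sub {d : ℕ} (a b : EuclideanSpace ℝ (Fin d) → ℝ)
    (ha : Differentiable ℝ a) (hb : Differentiable ℝ b)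
    (x : EuclideanSpace ℝ (Fin d)) :
    HasGradientAt (fun y => a y - b y) (gradient a x - gradient b x) x := by
  have h1 := (ha x).hasGradientAt.hasFDerivAt
  have h2 := (hb x).hasGradientAt.hasFDerivAt
  have h3 := h1.sub h2
  rw [← map_sub] at h3
  have h4 := h3.hasGradientAt
  rwa [LinearIsometryEquiv.symm_apply_apply] at h4

set_option maxHeartbeats 2000000 in
/-- Regularization gap: if `h^λ` minimizes
`J^λ(h) = ‖h − h*‖²_{L²(μ)} + λ‖∇h‖²_{L²(μ)}` over `H¹(μ)` and `h*` admits a weak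
weighted Laplacian `g ∈ L²(μ)` (i.e. `−⟨∇h*, ∇v⟩_{L²(μ)} = ⟨g, v⟩_{L²(μ)}` for all
`v ∈ H¹(μ)`), then `‖h^λ − h*‖²_{L²(μ)} ≤ λ²‖g‖²_{L²(μ)}` and
`‖∇h^λ − ∇h*‖²_{L²(μ)} ≤ λ‖g‖²_{L²(μ)}`. -/
theorem regularization_gap
    {d : ℕ} (μ : Measure (EuclideanSpace ℝ (Fin d))) [IsProbabilityMeasure μ]
    (lam : ℝ) (hlam : 0 < lam)
    (hstar hmin : EuclideanSpace ℝ (Fin d) → ℝ)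
    (hstar_diff : Differentiable ℝ hstar)
    (hstar_L2 : MemLp hstar 2 μ) (hstar_grad_L2 : MemLp (fun x => gradient hstar x) 2 μ)
    (hmin_diff : Differentiable ℝ hmin)
    (hmin_L2 : MemLp hmin 2 μ) (hmin_grad_L2 : MemLp (fun x => gradient hmin x) 2 μ)
    -- `h^λ` minimizes `J^λ` over `H¹(μ)`
    (hopt : ∀ h : EuclideanSpace ℝ (Fin d) → ℝ, Differentiable ℝ h →
      MemLp h 2 μ → MemLp (fun x => gradient h x) 2 μ →
      ∫ x, (hmin x - hstar x) ^ 2 ∂μ + lam * ∫ x, ‖gradient hmin x‖ ^ 2 ∂μ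
        ≤ ∫ x, (h x - hstar x) ^ 2 ∂μ + lam * ∫ x, ‖gradient h x‖ ^ 2 ∂μ)
    -- weak weighted Laplacian of `h*`
    (g : EuclideanSpace ℝ (Fin d) → ℝ) (hg_L2 : MemLp g 2 μ)
    (hweak : ∀ v : EuclideanSpace ℝ (Fin d) → ℝ, Differentiable ℝ v →
      MemLp v 2 μ → MemLp (fun x => gradient v x) 2 μ →
      -∫ x, ⟪gradient hstar x, gradient v x⟫ ∂μ = ∫ x, g x * v x ∂μ) :
    (∫ x, (hmin x - hstar x) ^ 2 ∂μ ≤ lam ^ 2 * ∫ x, (g x) ^ 2 ∂μ)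
    ∧ ∫ x, ‖gradient hmin x - gradient hstar x‖ ^ 2 ∂μ ≤ lam * ∫ x, (g x) ^ 2 ∂μ := by
  have e_diff : Differentiable ℝ (fun x => hmin x - hstar x) := hmin_diff.sub hstar_diff
  have e_L2 : MemLp (fun x => hmin x - hstar x) 2 μ := hmin_L2.sub hstar_L2
  have grad_e : ∀ x, gradient (fun y => hmin y - hstar y) x
      = gradient hmin x - gradient hstar x :=
    fun x => (aux_grad_sub hmin hstar hmin_diff hstar_diff x).gradient
  have Ge_L2 : MemLp (fun x => gradient hmin x - gradient hstar x) 2 μ :=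
    hmin_grad_L2.sub hstar_grad_L2
  have e_grad_L2 : MemLp (fun x => gradient (fun y => hmin y - hstar y) x) 2 μ := by
    simp only [grad_e]; exact Ge_L2
  -- scalar abbreviations
  set E := ∫ x, (hmin x - hstar x) ^ 2 ∂μ with hE_def
  set D := ∫ x, ‖gradient hmin x - gradient hstar x‖ ^ 2 ∂μ with hD_def
  set G := ∫ x, (g x) ^ 2 ∂μ with hG_def
  set M := ∫ x, ‖gradient hmin x‖ ^ 2 ∂μ with hM_def
  set P := ∫ x, ⟪gradient hmin x, gradient hmin x - gradient hstar x⟫ ∂μ with hP_def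
  set I := ∫ x, g x * (hmin x - hstar x) ∂μ with hI_def
  clear_value E D G M P I
  -- nonnegativity
  have hEnn : 0 ≤ E := hE_def ▸ integral_nonneg fun x => sq_nonneg _
  have hDnn : 0 ≤ D := hD_def ▸ integral_nonneg fun x => sq_nonneg _
  have hGnn : 0 ≤ G := hG_def ▸ integral_nonneg fun x => sq_nonneg _
  -- integrability facts
  have iM : Integrable (fun x => ‖gradient hmin x‖ ^ 2) μ :=
    (memLp_two_iff_integrable_sq_norm hmin_grad_L2.1).mp hmin_grad_L2
  have iD : Integrable (fun x => ‖gradient hmin x - gradient hstar x‖ ^ 2) μ :=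
    (memLp_two_iff_integrable_sq_norm Ge_L2.1).mp Ge_L2
  have iP : Integrable
      (fun x => ⟪gradient hmin x, gradient hmin x - gradient hstar x⟫) μ :=
    aux_integrable_inner hmin_grad_L2 Ge_L2
  have iSG : Integrable
      (fun x => ⟪gradient hstar x, gradient hmin x - gradient hstar x⟫) μ :=
    aux_integrable_inner hstar_grad_L2 Ge_L2
  have iGE : Integrable (fun x => g x * (hmin x - hstar x)) μ :=
    aux_integrable_mul hg_L2 e_L2
  have ig2 : Integrable (fun x => (g x) ^ 2) μ := hg_L2.integrable_sq
  have ie2 : Integrable (fun x => (hmin x - hstar x) ^ 2) μ := e_L2.integrable_sq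
  -- weak identity
  have hwe : -∫ x, ⟪gradient hstar x, gradient hmin x - gradient hstar x⟫ ∂μ = I := by
    have h := hweak _ e_diff e_L2 e_grad_L2
    simp only [grad_e] at h
    rw [hI_def]
    exact h
  -- P = D - I
  have hP : P = D - I := by
    have e2 : ∀ x, ⟪gradient hmin x, gradient hmin x - gradient hstar x⟫
        = ‖gradient hmin x - gradient hstar x‖ ^ 2
          + ⟪gradient hstar x, gradient hmin x - gradient hstar x⟫ := by
      intro x
      have hx : gradient hmin x
          = (gradient hmin x - gradient hstar x) + gradient hstar x := by abel
      calc ⟪gradient hmin x, gradient hmin x - gradient hstar x⟫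
          = ⟪(gradient hmin x - gradient hstar x) + gradient hstar x,
              gradient hmin x - gradient hstar x⟫ := by rw [← hx]
        _ = ⟪gradient hmin x - gradient hstar x, gradient hmin x - gradient hstar x⟫
              + ⟪gradient hstar x, gradient hmin x - gradient hstar x⟫ :=
            inner_add_left _ _ _
        _ = ‖gradient hmin x - gradient hstar x‖ ^ 2
              + ⟪gradient hstar x, gradient hmin x - gradient hstar x⟫ := by
            rw [real_inner_self_eq_norm_sq]
    rw [hP_def, integral_congr_ae (Filter.Eventually.of_forall e2), integral_add iD iSG,
      ← hD_def, ← hwe]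
    ring
  -- variational identity: E + lam * P = 0
  have key1 : E + lam * P = 0 := by
    apply aux_discrim (B := E + lam * D)
      (by nlinarith [mul_nonneg hlam.le hDnn])
    intro t
    have hdiff : Differentiable ℝ (fun x => hmin x + t * (hstar x - hmin x)) :=
      hmin_diff.add ((hstar_diff.sub hmin_diff).const_mul t)
    have hL2 : MemLp (fun x => hmin x + t * (hstar x - hmin x)) 2 μ :=
      hmin_L2.add ((hstar_L2.sub hmin_L2).const_mul t)
    have hgrad : ∀ x, gradient (fun y => hmin y + t * (hstar y - hmin y)) x
        = gradient hmin x + t • (gradient hstar x - gradient hmin x) :=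
      fun x => (aux_grad_comb hmin hstar hmin_diff hstar_diff t x).gradient
    have hgL2 : MemLp (fun x => gradient (fun y => hmin y + t * (hstar y - hmin y)) x) 2 μ := by
      simp only [hgrad]
      exact hmin_grad_L2.add ((hstar_grad_L2.sub hmin_grad_L2).const_smul t)
    have hopt_t := hopt _ hdiff hL2 hgL2
    have r1 : ∫ x, (hmin x + t * (hstar x - hmin x) - hstar x) ^ 2 ∂μ = (1 - t) ^ 2 * E := by
      rw [show (fun x => (hmin x + t * (hstar x - hmin x) - hstar x) ^ 2)
          = fun x => (1 - t) ^ 2 * (hmin x - hstar x) ^ 2 from funext fun x => by ring]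
      rw [integral_const_mul, ← hE_def]
    have i12 : Integrable (fun x => ‖gradient hmin x‖ ^ 2
        - 2 * t * ⟪gradient hmin x, gradient hmin x - gradient hstar x⟫) μ :=
      iM.sub (iP.const_mul (2 * t))
    have i3 : Integrable (fun x => t ^ 2 * ‖gradient hmin x - gradient hstar x‖ ^ 2) μ :=
      iD.const_mul (t ^ 2)
    have r2 : ∫ x, ‖gradient (fun y => hmin y + t * (hstar y - hmin y)) x‖ ^ 2 ∂μ
        = M - 2 * t * P + t ^ 2 * D := by
      have e3 : ∀ x, ‖gradient (fun y => hmin y + t * (hstar y - hmin y)) x‖ ^ 2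
          = ‖gradient hmin x‖ ^ 2
            - 2 * t * ⟪gradient hmin x, gradient hmin x - gradient hstar x⟫
            + t ^ 2 * ‖gradient hmin x - gradient hstar x‖ ^ 2 := by
        intro x
        rw [hgrad x]
        have hx : gradient hmin x + t • (gradient hstar x - gradient hmin x)
            = gradient hmin x - t • (gradient hmin x - gradient hstar x) := by
          rw [smul_sub, smul_sub]; abel
        rw [hx, norm_sub_sq_real, real_inner_smul_right, norm_smul]
        simp [mul_pow]
        ring
      rw [integral_congr_ae (Filter.Eventually.of_forall e3), integral_add i12 i3,
        integral_sub iM (iP.const_mul (2 * t)), integral_const_mul, integral_const_mul,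
        ← hM_def, ← hP_def, ← hD_def]
    rw [r1, r2] at hopt_t
    nlinarith [hopt_t]
  -- E + lam * D = lam * I
  have heq : E + lam * D = lam * I := by
    rw [hP] at key1
    nlinarith [key1]
  -- Cauchy-Schwarz: I^2 <= G * E
  have hIle : I ^ 2 ≤ G * E := by
    apply aux_cs hEnn hGnn
    intro s
    have h0 : 0 ≤ ∫ x, (g x + s * (hmin x - hstar x)) ^ 2 ∂μ :=
      integral_nonneg fun x => sq_nonneg _
    have e4 : ∀ x, (g x + s * (hmin x - hstar x)) ^ 2
        = ((g x) ^ 2 + 2 * s * (g x * (hmin x - hstar x)))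
          + s ^ 2 * (hmin x - hstar x) ^ 2 := fun x => by ring
    have i12 : Integrable (fun x => (g x) ^ 2 + 2 * s * (g x * (hmin x - hstar x))) μ :=
      ig2.add (iGE.const_mul (2 * s))
    have i3 : Integrable (fun x => s ^ 2 * (hmin x - hstar x) ^ 2) μ :=
      ie2.const_mul (s ^ 2)
    rw [integral_congr_ae (Filter.Eventually.of_forall e4), integral_add i12 i3,
      integral_add ig2 (iGE.const_mul (2 * s)), integral_const_mul, integral_const_mul,
      ← hG_def, ← hI_def, ← hE_def] at h0
    linarith [h0]
  -- conclude
  have hInn : 0 ≤ I := by nlinarith [heq, hEnn, hDnn, mul_nonneg hlam.le hDnn]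
  have hEleI : E ≤ lam * I := by nlinarith [heq, mul_nonneg hlam.le hDnn]
  have hsq : E ^ 2 ≤ lam ^ 2 * (G * E) := by
    have h1 : E * E ≤ (lam * I) * (lam * I) := mul_self_le_mul_self hEnn hEleI
    nlinarith [mul_le_mul_of_nonneg_left hIle (sq_nonneg lam)]
  have g1 : E ≤ lam ^ 2 * G := by
    rcases eq_or_lt_of_le hEnn with h | h
    · rw [← h]; exact mul_nonneg (sq_nonneg lam) hGnn
    · exact le_of_mul_le_mul_right (by nlinarith [hsq]) h
  have hDleI : D ≤ I := by
    have h1 : lam * D ≤ lam * I := by linarith [heq, hEnn]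
    exact le_of_mul_le_mul_left h1 hlam
  have hI2 : I ^ 2 ≤ lam ^ 2 * G ^ 2 := by
    have h1 : G * E ≤ G * (lam ^ 2 * G) := mul_le_mul_of_nonneg_left g1 hGnn
    nlinarith [hIle]
  have hIleLG : I ≤ lam * G := by
    nlinarith [hI2, hInn, mul_nonneg hlam.le hGnn]
  exact ⟨g1, by linarith⟩
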